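/- For a dual-unitary U on C^q ⊗ C^q, the squared Frobenius norm of the shifted channel M̃₊[U] = M₊[U] - |Φ⁺⟩⟨Φ⁺| equals (q²-1)(1 - e_p(U)), where e_p(U) is the entangling power. -/

import Mathlib

open Matrix

/-- Matrices on the tensor product `ℂ^q ⊗ ℂ^q`, indexed by pairs. -/
abbrev MQ (q : ℕ) := Matrix (Fin q × Fin q) (Fin q × Fin q) ℂ

/-- Realignment R1 : `⟨βα|A^{R1}|ji⟩ = ⟨iα|A|jβ⟩`. -/
def R1 {q : ℕ} (A : MQ q) : MQ q := fun p r => A (r.2, p.2) (r.1, p.1)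

/-- Realignment R2 : `⟨ij|A^{R2}|αβ⟩ = ⟨iα|A|jβ⟩`. -/
def R2 {q : ℕ} (A : MQ q) : MQ q := fun p r => A (p.1, r.1) (p.2, r.2)

/-- The swap operator `S|iα⟩ = |αi⟩`. -/
def Swap (q : ℕ) : MQ q := fun p r => if p.1 = r.2 ∧ p.2 = r.1 then 1 else 0

/-- Partial transpose on the first factor: `⟨jα|A^{T1}|iβ⟩ = ⟨iα|A|jβ⟩`. -/
def T1 {q : ℕ} (A : MQ q) : MQ q := fun p r => A (r.1, p.2) (p.1, r.2)

/-- Partial transpose on the second factor: `⟨iβ|A^{T2}|jα⟩ = ⟨iα|A|jβ⟩`. -/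
def T2 {q : ℕ} (A : MQ q) : MQ q := fun p r => A (p.1, r.2) (r.1, p.2)

/-- The channel superoperator `M₊[U] = (1/q) (U^{T2} U^{T2†})^{R1}`. -/
noncomputable def Mplus {q : ℕ} (U : MQ q) : MQ q :=
  ((q : ℂ))⁻¹ • R1 (T2 U * (T2 U)ᴴ)

/-- The maximally entangled state `|Φ⁺⟩ = (1/√q) Σ_j |jj⟩`. -/
noncomputable def PhiPlus (q : ℕ) : Fin q × Fin q → ℂ :=
  fun p => if p.1 = p.2 then ((Real.sqrt q : ℝ) : ℂ)⁻¹ else 0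

/-- Operator entanglement `E(V) = 1 - (1/q⁴) tr[(V^{R1} V^{R1†})²]`. -/
noncomputable def opEnt {q : ℕ} (V : MQ q) : ℂ :=
  1 - (1 / (q : ℂ) ^ 4) * Matrix.trace ((R1 V * (R1 V)ᴴ) * (R1 V * (R1 V)ᴴ))

/-- Entangling power of a dual-unitary `U`:
`e_p(U) = E(US)/E(S)` with `E(S) = (q²-1)/q²`. -/
noncomputable def epDual {q : ℕ} (U : MQ q) : ℂ :=
  ((q : ℂ) ^ 2 / ((q : ℂ) ^ 2 - 1)) * opEnt (U * Swap q)

lemma trace_mul_sum {q : ℕ} (A B : MQ q) :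
    Matrix.trace (A * B) = ∑ p : Fin q × Fin q, ∑ r : Fin q × Fin q, A p r * B r p := by
  simp [Matrix.trace, Matrix.mul_apply, Matrix.diag]

lemma frob {q : ℕ} (A B : MQ q) :
    Matrix.trace (A * Bᴴ) = ∑ p : Fin q × Fin q, ∑ r : Fin q × Fin q, A p r * star (B p r) := by
  simp [Matrix.trace, Matrix.mul_apply, Matrix.diag, Matrix.conjTranspose_apply]

def eR1 (q : ℕ) : ((Fin q × Fin q) × (Fin q × Fin q)) ≃ ((Fin q × Fin q) × (Fin q × Fin q)) where
  toFun x := ((x.2.2, x.1.2), (x.2.1, x.1.1))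
  invFun x := ((x.2.2, x.1.2), (x.2.1, x.1.1))
  left_inv x := rfl
  right_inv x := rfl

lemma trace_R1_frob {q : ℕ} (A B : MQ q) :
    Matrix.trace (R1 A * (R1 B)ᴴ) = Matrix.trace (A * Bᴴ) := by
  rw [frob, frob]
  rw [← Fintype.sum_prod_type', ← Fintype.sum_prod_type']
  exact Fintype.sum_equiv (eR1 q) _ _ (fun x => rfl)

def eT2 (q : ℕ) : ((Fin q × Fin q) × (Fin q × Fin q)) ≃ ((Fin q × Fin q) × (Fin q × Fin q)) where
  toFun x := ((x.1.1, x.2.2), (x.2.1, x.1.2))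
  invFun x := ((x.1.1, x.2.2), (x.2.1, x.1.2))
  left_inv x := rfl
  right_inv x := rfl

lemma trace_T2_frob {q : ℕ} (A B : MQ q) :
    Matrix.trace (T2 A * (T2 B)ᴴ) = Matrix.trace (A * Bᴴ) := by
  rw [frob, frob]
  rw [← Fintype.sum_prod_type', ← Fintype.sum_prod_type']
  exact Fintype.sum_equiv (eT2 q) _ _ (fun x => rfl)

lemma mul_swap_apply {q : ℕ} (A : MQ q) (p r : Fin q × Fin q) :
    (A * Swap q) p r = A p (r.2, r.1) := by
  simp only [Matrix.mul_apply, Swap]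
  rw [Fintype.sum_prod_type]
  simp [ite_and, Finset.sum_ite_eq']

lemma swap_mul_swap (q : ℕ) : Swap q * Swap q = 1 := by
  funext p r
  rw [mul_swap_apply]
  simp [Swap, Matrix.one_apply, Prod.ext_iff, and_comm]

lemma swap_conjTranspose (q : ℕ) : (Swap q)ᴴ = Swap q := by
  funext p r
  simp only [Swap, Matrix.conjTranspose_apply]
  split <;> split <;> simp_all <;> omega

lemma transpose_ct {q : ℕ} (A : MQ q) : (Aᵀ)ᴴ = (Aᴴ)ᵀ := by
  funext p r; simp [Matrix.conjTranspose_apply, Matrix.transpose_apply]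

lemma R1_mul_swap {q : ℕ} (U : MQ q) : R1 (U * Swap q) = (T2 U)ᵀ * Swap q := by
  funext p r
  rw [mul_swap_apply]
  simp only [R1, Matrix.transpose_apply, T2]
  rw [mul_swap_apply]

lemma key_trace {q : ℕ} (U : MQ q) :
    Matrix.trace ((R1 (U * Swap q) * (R1 (U * Swap q))ᴴ) * (R1 (U * Swap q) * (R1 (U * Swap q))ᴴ)) =
    Matrix.trace ((T2 U * (T2 U)ᴴ) * (T2 U * (T2 U)ᴴ)) := by
  rw [R1_mul_swap]
  have h1 : ((T2 U)ᵀ * Swap q) * ((T2 U)ᵀ * Swap q)ᴴ = ((T2 U)ᴴ * T2 U)ᵀ := by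
    rw [Matrix.conjTranspose_mul, swap_conjTranspose, Matrix.mul_assoc,
      ← Matrix.mul_assoc (Swap q), swap_mul_swap, Matrix.one_mul,
      transpose_ct, ← Matrix.transpose_mul]
  rw [h1, ← Matrix.transpose_mul, Matrix.trace_transpose]
  rw [Matrix.mul_assoc, Matrix.trace_mul_comm]
  simp only [Matrix.mul_assoc]

lemma c_mul_star (q : ℕ) :
    ((Real.sqrt q : ℝ) : ℂ)⁻¹ * star ((Real.sqrt q : ℝ) : ℂ)⁻¹ = (q : ℂ)⁻¹ := by
  rw [star_inv₀, Complex.star_def, Complex.conj_ofReal, ← mul_inv, ← Complex.ofReal_mul,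
    Real.mul_self_sqrt (by positivity)]
  push_cast
  rfl

lemma sum_v (q : ℕ) (hq : 0 < q) :
    ∑ p : Fin q × Fin q, PhiPlus q p * star (PhiPlus q p) = 1 := by
  simp only [PhiPlus]
  rw [Fintype.sum_prod_type]
  simp only [apply_ite star, star_zero, ite_mul, mul_ite, mul_zero, zero_mul,
    Finset.sum_ite_eq', Finset.mem_univ, if_true, c_mul_star, ite_eq_ite]
  have h2 : ∀ x x1 : Fin q, (if x = x1 then (if x = x1 then (q:ℂ)⁻¹ else 0) else 0)
      = if x = x1 then (q:ℂ)⁻¹ else 0 := by intro x x1; split <;> simp_all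
  simp only [h2, Finset.sum_ite_eq, Finset.mem_univ, if_true]
  rw [Finset.sum_const, Finset.card_univ, Fintype.card_fin, nsmul_eq_mul]
  have : (q:ℂ) ≠ 0 := Nat.cast_ne_zero.mpr hq.ne'
  field_simp

lemma P_herm (q : ℕ) : (vecMulVec (PhiPlus q) (star (PhiPlus q)))ᴴ
    = vecMulVec (PhiPlus q) (star (PhiPlus q)) := by
  funext p r
  simp only [Matrix.conjTranspose_apply, Matrix.vecMulVec_apply, Pi.star_apply, star_mul',
    star_star]
  ring

lemma trace_PP (q : ℕ) (hq : 0 < q) :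
    Matrix.trace (vecMulVec (PhiPlus q) (star (PhiPlus q)) *
      (vecMulVec (PhiPlus q) (star (PhiPlus q)))ᴴ) = 1 := by
  rw [P_herm, trace_mul_sum]
  simp only [Matrix.vecMulVec_apply, Pi.star_apply]
  have : ∀ p r : Fin q × Fin q,
      PhiPlus q p * star (PhiPlus q r) * (PhiPlus q r * star (PhiPlus q p)) =
      (PhiPlus q p * star (PhiPlus q p)) * (PhiPlus q r * star (PhiPlus q r)) := by
    intro p r; ring
  simp only [this, ← Finset.mul_sum, sum_v q hq, mul_one]

lemma trace_R1_P (q : ℕ) (A : MQ q) :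
    Matrix.trace (R1 A * vecMulVec (PhiPlus q) (star (PhiPlus q)))
      = (q : ℂ)⁻¹ * Matrix.trace A := by
  rw [trace_mul_sum]
  simp only [R1, Matrix.vecMulVec_apply, Pi.star_apply, PhiPlus]
  rw [Fintype.sum_prod_type]
  simp only [Fintype.sum_prod_type]
  simp only [apply_ite star, star_zero, mul_ite, mul_zero, ite_mul, zero_mul,
    Finset.sum_ite_eq, Finset.sum_ite_eq', Finset.mem_univ, if_true]
  have hcc : ∀ z : ℂ, z * (((Real.sqrt q : ℝ) : ℂ)⁻¹ * star ((Real.sqrt q : ℝ) : ℂ)⁻¹)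
      = (q : ℂ)⁻¹ * z := by
    intro z; rw [c_mul_star]; ring
  simp only [hcc, ← Finset.mul_sum, Finset.sum_ite_irrel, Finset.sum_const_zero,
    Finset.sum_ite_eq, Finset.sum_ite_eq', Finset.mem_univ, if_true]
  congr 1
  rw [Matrix.trace, Fintype.sum_prod_type, Finset.sum_comm]
  rfl

/-- for a dual-unitary `U`, the squared Frobenius norm of
`M̃₊[U] = M₊[U] - |Φ⁺⟩⟨Φ⁺|` equals `(q²-1)(1 - e_p(U))`. -/
theorem norm_sq_shifted_channel (q : ℕ) (hq : 2 ≤ q) (U : MQ q)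
    (hU : U ∈ Matrix.unitaryGroup (Fin q × Fin q) ℂ)
    (hR1 : R1 U ∈ Matrix.unitaryGroup (Fin q × Fin q) ℂ) :
    Matrix.trace ((Mplus U - vecMulVec (PhiPlus q) (star (PhiPlus q))) *
        (Mplus U - vecMulVec (PhiPlus q) (star (PhiPlus q)))ᴴ) =
      ((q : ℂ) ^ 2 - 1) * (1 - epDual U) := by
  have hq0 : 0 < q := by omega
  have hqC : (q : ℂ) ≠ 0 := Nat.cast_ne_zero.mpr hq0.ne'
  set P : MQ q := vecMulVec (PhiPlus q) (star (PhiPlus q)) with hPdef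
  set X₀ : MQ q := T2 U * (T2 U)ᴴ with hX₀
  set t : ℂ := Matrix.trace (X₀ * X₀) with ht
  have hUU : U * Uᴴ = 1 := by
    have := (Matrix.mem_unitaryGroup_iff).mp hU
    simpa [Matrix.star_eq_conjTranspose] using this
  have htrX : Matrix.trace X₀ = (q : ℂ) ^ 2 := by
    rw [hX₀, trace_T2_frob, hUU, Matrix.trace_one]
    simp [Fintype.card_prod]
    ring
  have hX0h : X₀ᴴ = X₀ := by
    rw [hX₀, Matrix.conjTranspose_mul, Matrix.conjTranspose_conjTranspose]
  -- cross term
  have hMP : Matrix.trace (Mplus U * P) = 1 := by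
    rw [Mplus, Matrix.smul_mul, Matrix.trace_smul, smul_eq_mul, hPdef, trace_R1_P, ← hX₀, htrX]
    field_simp
  have hPM : Matrix.trace (P * (Mplus U)ᴴ) = 1 := by
    have : P * (Mplus U)ᴴ = (Mplus U * P)ᴴ := by
      rw [Matrix.conjTranspose_mul, P_herm]
    rw [this, Matrix.trace_conjTranspose, hMP, star_one]
  -- norm of M
  have hMM : Matrix.trace (Mplus U * (Mplus U)ᴴ) = (q : ℂ)⁻¹ * (q : ℂ)⁻¹ * t := by
    rw [Mplus, ← hX₀, Matrix.conjTranspose_smul, Matrix.smul_mul, Matrix.mul_smul,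
      Matrix.trace_smul, Matrix.trace_smul, smul_eq_mul, smul_eq_mul, trace_R1_frob, hX0h, ← ht]
    rw [star_inv₀]
    have : star ((q : ℂ)) = (q : ℂ) := by simp
    rw [this]
    ring
  -- the opEnt trace
  have hT : Matrix.trace ((R1 (U * Swap q) * (R1 (U * Swap q))ᴴ) *
      (R1 (U * Swap q) * (R1 (U * Swap q))ᴴ)) = t := by
    rw [key_trace, ← hX₀, ← ht]
  -- expand LHS
  rw [Matrix.conjTranspose_sub, Matrix.sub_mul, Matrix.mul_sub, Matrix.mul_sub,
    Matrix.trace_sub, Matrix.trace_sub, Matrix.trace_sub]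
  rw [show Mplus U * Pᴴ = Mplus U * P by rw [P_herm]]
  rw [show P * Pᴴ = P * P by rw [P_herm]]
  have hPP : Matrix.trace (P * P) = 1 := by
    have := trace_PP q hq0
    rwa [P_herm] at this
  rw [hMM, hMP, hPM, hPP]
  -- RHS
  rw [epDual, opEnt, hT]
  have hq2 : (q : ℂ) ^ 2 - 1 ≠ 0 := by
    rw [sub_ne_zero]
    intro h
    have : ((q ^ 2 : ℕ) : ℂ) = ((1 : ℕ) : ℂ) := by push_cast; simpa using h
    have h2 : q ^ 2 = 1 := Nat.cast_injective this
    nlinarith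
  field_simp
  ring
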